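/- Let f : [a,b] → ℝ be continuous on [a,b] with a > 0 and differentiable on (a,b). If P(f′) := sup over u ∈ (a,b) of |u·f′(u)| is finite, then for any x ∈ (a,b), |f(x) − (1/(b−a))·∫ₐᵇ f(t) dt| ≤ (P(f′)/(b−a))·[ ln( I(x,b)^{b−x} / I(a,x)^{x−a} ) + 2(x − A)·ln x ]. -/

import Mathlib

open Real Set intervalIntegral

/-- Key pointwise lemma: under the bound `|u f'(u)| ≤ P`, `f` satisfies
`|f x - f t| ≤ P * |log x - log t|` on `[a,b]`. -/
lemma ostrowski_key (a b : ℝ) (f : ℝ → ℝ) (P : ℝ)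
    (ha : 0 < a) (hab : a < b)
    (hf : ContinuousOn f (Set.Icc a b))
    (hd : DifferentiableOn ℝ f (Set.Ioo a b))
    (hPle : ∀ u ∈ Set.Ioo a b, |u * deriv f u| ≤ P)
    (x : ℝ) (hx : x ∈ Set.Icc a b) (t : ℝ) (ht : t ∈ Set.Icc a b) :
    |f x - f t| ≤ P * |Real.log x - Real.log t| := by
  have hlog : ContinuousOn Real.log (Set.Icc a b) :=
    Real.continuousOn_log.mono (fun u hu => by
      simp only [Set.mem_compl_iff, Set.mem_singleton_iff]
      exact (ha.trans_le hu.1).ne')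
  have hdiffat : ∀ u ∈ Set.Ioo a b, DifferentiableAt ℝ f u := fun u hu =>
    (hd u hu).differentiableAt (isOpen_Ioo.mem_nhds hu)
  have hmono : MonotoneOn (fun u => f u + P * Real.log u) (Set.Icc a b) := by
    apply monotoneOn_of_deriv_nonneg (convex_Icc a b)
      (hf.add (continuousOn_const.mul hlog))
    · rw [interior_Icc]
      intro u hu
      exact (((hdiffat u hu).add ((differentiableAt_const P).mul
        (Real.differentiableAt_log (ha.trans hu.1).ne'))).differentiableWithinAt)
    · rw [interior_Icc]
      intro u hu
      have hu0 : 0 < u := ha.trans hu.1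
      show 0 ≤ deriv (fun y => f y + P * Real.log y) u
      rw [deriv_fun_add (hdiffat u hu) ((Real.differentiableAt_log hu0.ne').const_mul
        P),
        deriv_const_mul _ (Real.differentiableAt_log hu0.ne'), Real.deriv_log]
      have h1 : -P ≤ u * deriv f u := neg_le_of_abs_le (hPle u hu)
      have : 0 ≤ u * (deriv f u + P * u⁻¹) := by
        rw [mul_add]
        have : u * (P * u⁻¹) = P := by field_simp
        linarith
      nlinarith
  have hanti : AntitoneOn (fun u => f u - P * Real.log u) (Set.Icc a b) := by
    apply antitoneOn_of_deriv_nonpos (convex_Icc a b)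
      (hf.sub (continuousOn_const.mul hlog))
    · rw [interior_Icc]
      intro u hu
      exact (((hdiffat u hu).sub ((differentiableAt_const P).mul
        (Real.differentiableAt_log (ha.trans hu.1).ne'))).differentiableWithinAt)
    · rw [interior_Icc]
      intro u hu
      have hu0 : 0 < u := ha.trans hu.1
      show deriv (fun y => f y - P * Real.log y) u ≤ 0
      rw [deriv_fun_sub (hdiffat u hu) ((Real.differentiableAt_log hu0.ne').const_mul
        P),
        deriv_const_mul _ (Real.differentiableAt_log hu0.ne'), Real.deriv_log]
      have h1 : u * deriv f u ≤ P := le_of_abs_le (hPle u hu)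
      have : u * (deriv f u - P * u⁻¹) ≤ 0 := by
        rw [mul_sub]
        have : u * (P * u⁻¹) = P := by field_simp
        linarith
      nlinarith
  rcases le_total t x with hle | hle
  · have hlt : Real.log t ≤ Real.log x := Real.log_le_log (ha.trans_le ht.1) hle
    rw [abs_of_nonneg (sub_nonneg.2 hlt)]
    have h1 := hmono ht hx hle
    have h2 := hanti ht hx hle
    simp only at h1 h2
    rw [abs_le]; constructor <;> linarith
  · have hlt : Real.log x ≤ Real.log t := Real.log_le_log (ha.trans_le hx.1) hle
    rw [abs_of_nonpos (sub_nonpos.2 hlt)]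
    have h1 := hmono hx ht hle
    have h2 := hanti hx ht hle
    simp only at h1 h2
    rw [abs_le]; constructor <;> linarith

/-- Theorem 1.3: an Ostrowski type inequality involving
`P(f') := sup_{u ∈ (a,b)} |u f'(u)|` and the identric mean. -/
theorem ostrowski_type_identric (a b : ℝ) (f : ℝ → ℝ)
    (ha : 0 < a) (hab : a < b)
    (hf : ContinuousOn f (Set.Icc a b))
    (hd : DifferentiableOn ℝ f (Set.Ioo a b))
    (hbdd : BddAbove ((fun u => |u * deriv f u|) '' Set.Ioo a b))
    (x : ℝ) (hx : x ∈ Set.Ioo a b) :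
    |f x - (1 / (b - a)) * ∫ t in a..b, f t| ≤
      sSup ((fun u => |u * deriv f u|) '' Set.Ioo a b) / (b - a) *
        (Real.log
          ((1 / Real.exp 1 * (b ^ b / x ^ x) ^ (1 / (b - x))) ^ (b - x) /
            (1 / Real.exp 1 * (x ^ x / a ^ a) ^ (1 / (x - a))) ^ (x - a)) +
          2 * (x - (a + b) / 2) * Real.log x) := by
  obtain ⟨hax, hxb⟩ := hx
  have hb0 : 0 < b := ha.trans hab
  have hx0 : 0 < x := ha.trans hax
  have hba : 0 < b - a := sub_pos.2 hab
  have huab : Set.uIcc a b = Set.Icc a b := Set.uIcc_of_le hab.le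
  have huax : Set.uIcc a x = Set.Icc a x := Set.uIcc_of_le hax.le
  have huxb : Set.uIcc x b = Set.Icc x b := Set.uIcc_of_le hxb.le
  have hsub1 : Set.uIcc a x ⊆ Set.uIcc a b := by
    rw [huax, huab]; exact Set.Icc_subset_Icc le_rfl hxb.le
  have hsub2 : Set.uIcc x b ⊆ Set.uIcc a b := by
    rw [huxb, huab]; exact Set.Icc_subset_Icc hax.le le_rfl
  set P := sSup ((fun u => |u * deriv f u|) '' Set.Ioo a b) with hPdef
  have hPle : ∀ u ∈ Set.Ioo a b, |u * deriv f u| ≤ P := fun u hu =>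
    le_csSup hbdd ⟨u, hu, rfl⟩
  have hP0 : 0 ≤ P := le_trans (abs_nonneg _) (hPle x ⟨hax, hxb⟩)
  have key := ostrowski_key a b f P ha hab hf hd hPle x ⟨hax.le, hxb.le⟩
  set V : ℝ := a * Real.log a + b * Real.log b - (a + b) * Real.log x + 2 * x - a - b
    with hVdef
  -- RHS bracket equals V
  have hRHS : Real.log
        ((1 / Real.exp 1 * (b ^ b / x ^ x) ^ (1 / (b - x))) ^ (b - x) /
          (1 / Real.exp 1 * (x ^ x / a ^ a) ^ (1 / (x - a))) ^ (x - a)) +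
        2 * (x - (a + b) / 2) * Real.log x = V := by
    have hbx : b - x ≠ 0 := (sub_pos.2 hxb).ne'
    have hxa : x - a ≠ 0 := (sub_pos.2 hax).ne'
    have he : (0:ℝ) < 1 / Real.exp 1 := by positivity
    have hq1 : (0:ℝ) < b ^ b / x ^ x := by positivity
    have hq2 : (0:ℝ) < x ^ x / a ^ a := by positivity
    have hE1 : (0:ℝ) < 1 / Real.exp 1 * (b ^ b / x ^ x) ^ (1 / (b - x)) := by positivity
    have hE2 : (0:ℝ) < 1 / Real.exp 1 * (x ^ x / a ^ a) ^ (1 / (x - a)) := by positivity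
    rw [Real.log_div (Real.rpow_pos_of_pos hE1 _).ne' (Real.rpow_pos_of_pos hE2 _).ne',
      Real.log_rpow hE1, Real.log_rpow hE2,
      Real.log_mul he.ne' (Real.rpow_pos_of_pos hq1 _).ne',
      Real.log_mul he.ne' (Real.rpow_pos_of_pos hq2 _).ne',
      Real.log_rpow hq1, Real.log_rpow hq2,
      Real.log_div (Real.rpow_pos_of_pos hb0 b).ne' (Real.rpow_pos_of_pos hx0 x).ne',
      Real.log_div (Real.rpow_pos_of_pos hx0 x).ne' (Real.rpow_pos_of_pos ha a).ne',
      Real.log_rpow hb0, Real.log_rpow hx0, Real.log_rpow ha,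
      one_div (Real.exp 1), Real.log_inv, Real.log_exp]
    field_simp
    ring
  rw [hRHS]
  -- integrability facts
  have hfint : IntervalIntegrable f MeasureTheory.volume a b :=
    (huab.symm ▸ hf).intervalIntegrable
  have habs_cont : ContinuousOn (fun t => |f x - f t|) (Set.Icc a b) :=
    (continuousOn_const.sub hf).abs
  have hlogc0 : ContinuousOn (fun t => |Real.log x - Real.log t|) (Set.Icc a b) :=
    (continuousOn_const.sub (Real.continuousOn_log.mono (fun u hu => by
      simp only [Set.mem_compl_iff, Set.mem_singleton_iff]
      exact (ha.trans_le hu.1).ne'))).abs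
  have hlogc : ContinuousOn (fun t => P * |Real.log x - Real.log t|) (Set.Icc a b) :=
    continuousOn_const.mul hlogc0
  have habs_int : IntervalIntegrable (fun t => |f x - f t|) MeasureTheory.volume a b :=
    (huab.symm ▸ habs_cont).intervalIntegrable
  have hlog_int : IntervalIntegrable (fun t => P * |Real.log x - Real.log t|)
      MeasureTheory.volume a b :=
    (huab.symm ▸ hlogc).intervalIntegrable
  have hlint : IntervalIntegrable Real.log MeasureTheory.volume a b :=
    (Real.continuousOn_log.mono (fun u hu => by
      simp only [Set.mem_compl_iff, Set.mem_singleton_iff]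
      rw [huab] at hu
      exact (ha.trans_le hu.1).ne')).intervalIntegrable
  -- rewrite the LHS
  have hLHS : f x - (1 / (b - a)) * ∫ t in a..b, f t
      = (1 / (b - a)) * ∫ t in a..b, (f x - f t) := by
    rw [intervalIntegral.integral_sub intervalIntegrable_const hfint,
      intervalIntegral.integral_const]
    field_simp
    ring
  rw [hLHS, abs_mul, abs_of_pos (by positivity : (0:ℝ) < 1 / (b - a))]
  -- integral of the log bound
  have hcalc : (∫ t in a..b, P * |Real.log x - Real.log t|) = P * V := by
    rw [intervalIntegral.integral_const_mul]
    have h1 : IntervalIntegrable (fun t => |Real.log x - Real.log t|)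
        MeasureTheory.volume a x :=
      (huax.symm ▸ hlogc0.mono (Set.Icc_subset_Icc le_rfl hxb.le)).intervalIntegrable
    have h2 : IntervalIntegrable (fun t => |Real.log x - Real.log t|)
        MeasureTheory.volume x b :=
      (huxb.symm ▸ hlogc0.mono (Set.Icc_subset_Icc hax.le le_rfl)).intervalIntegrable
    have hs : (∫ t in a..b, |Real.log x - Real.log t|)
        = (∫ t in a..x, |Real.log x - Real.log t|)
          + ∫ t in x..b, |Real.log x - Real.log t| :=
      (intervalIntegral.integral_add_adjacent_intervals h1 h2).symm
    have e1 : (∫ t in a..x, |Real.log x - Real.log t|)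
        = ∫ t in a..x, (Real.log x - Real.log t) := by
      apply intervalIntegral.integral_congr
      intro t ht
      rw [huax] at ht
      show |Real.log x - Real.log t| = Real.log x - Real.log t
      exact abs_of_nonneg (sub_nonneg.2 (Real.log_le_log (ha.trans_le ht.1) ht.2))
    have e2 : (∫ t in x..b, |Real.log x - Real.log t|)
        = ∫ t in x..b, (Real.log t - Real.log x) := by
      apply intervalIntegral.integral_congr
      intro t ht
      rw [huxb] at ht
      show |Real.log x - Real.log t| = Real.log t - Real.log x
      rw [abs_of_nonpos (sub_nonpos.2 (Real.log_le_log hx0 ht.1))]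
      ring
    have i1 : (∫ t in a..x, (Real.log x - Real.log t))
        = (x - a) * Real.log x - (x * Real.log x - a * Real.log a - x + a) := by
      rw [intervalIntegral.integral_sub intervalIntegrable_const (hlint.mono_set hsub1)]
      rw [integral_log]
      simp [smul_eq_mul]
    have i2 : (∫ t in x..b, (Real.log t - Real.log x))
        = (b * Real.log b - x * Real.log x - b + x) - (b - x) * Real.log x := by
      rw [intervalIntegral.integral_sub (hlint.mono_set hsub2) intervalIntegrable_const]
      rw [integral_log]
      simp [smul_eq_mul]
    rw [hs, e1, e2, i1, i2, hVdef]
    ring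
  calc (1 / (b - a)) * |∫ t in a..b, (f x - f t)|
      ≤ (1 / (b - a)) * ∫ t in a..b, |f x - f t| := by
        apply mul_le_mul_of_nonneg_left
          (intervalIntegral.abs_integral_le_integral_abs hab.le) (by positivity)
    _ ≤ (1 / (b - a)) * ∫ t in a..b, P * |Real.log x - Real.log t| := by
        apply mul_le_mul_of_nonneg_left ?_ (by positivity)
        exact intervalIntegral.integral_mono_on hab.le habs_int hlog_int
          (fun t ht => key t ht)
    _ = P / (b - a) * V := by rw [hcalc]; ring
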